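/- Let n be a natural number and let A be an n × n matrix with integer entries. Form the n × n matrix M over the ring of one-variable integral Laurent polynomials with entries M i j = T(−1) * (A i j) − T(1) * (A j i), where T(k) is the monomial t^k (so M = t⁻¹A − tAᵀ). Then the coefficient of degree n of the Laurent polynomial det M equals (−1)^n * det A; moreover the coefficient of det M vanishes in every degree greater than n. -/

import Mathlib

open LaurentPolynomial

lemma coeff_mul_bound (f g : LaurentPolynomial ℤ) (m k : ℤ)
    (hf : ∀ d, m < d → f.coeff d = 0) (hg : ∀ d, k < d → g.coeff d = 0) :
    (∀ d, m + k < d → (f * g).coeff d = 0) ∧ (f * g).coeff (m + k) = f.coeff m * g.coeff k := by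
  classical
  constructor
  · intro d hd
    by_contra h
    have hmem : d ∈ (f * g).coeff.support := Finsupp.mem_support_iff.2 h
    have := AddMonoidAlgebra.support_coeff_mul_subset f g hmem
    rw [Finset.mem_add] at this
    obtain ⟨a, ha, b, hb, hab⟩ := this
    have ha' : a ≤ m := by
      by_contra hc
      exact (Finsupp.mem_support_iff.1 ha) (hf a (by omega))
    have hb' : b ≤ k := by
      by_contra hc
      exact (Finsupp.mem_support_iff.1 hb) (hg b (by omega))
    omega
  · apply AddMonoidAlgebra.coeff_mul_add_of_uniqueAdd
    intro a b ha hb hab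
    have ha' : a ≤ m := by
      by_contra hc
      exact (Finsupp.mem_support_iff.1 ha) (hf a (by omega))
    have hb' : b ≤ k := by
      by_contra hc
      exact (Finsupp.mem_support_iff.1 hb) (hg b (by omega))
    constructor <;> omega

lemma coeff_prod_bound {ι : Type*} (s : Finset ι) (p : ι → LaurentPolynomial ℤ)
    (h : ∀ i ∈ s, ∀ d, 1 < d → (p i).coeff d = 0) :
    (∀ d, (s.card : ℤ) < d → (∏ i ∈ s, p i).coeff d = 0) ∧
      (∏ i ∈ s, p i).coeff (s.card : ℤ) = ∏ i ∈ s, (p i).coeff 1 := by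
  classical
  induction s using Finset.induction with
  | empty =>
    constructor
    · intro d hd
      simp only [Finset.prod_empty]
      rw [show (1 : LaurentPolynomial ℤ).coeff = Finsupp.single 0 1 from rfl]
      rw [Finsupp.single_apply]
      simp only [Finset.card_empty, Nat.cast_zero] at hd
      rw [if_neg (by omega)]
    · simp only [Finset.prod_empty, Finset.card_empty, Nat.cast_zero]
      rw [show (1 : LaurentPolynomial ℤ).coeff = Finsupp.single 0 1 from rfl, Finsupp.single_apply]
      simp
  | insert a s' hnot ih =>
    have ih' := ih (fun i hi d hd => h i (Finset.mem_insert_of_mem hi) d hd)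
    have ha := h a (Finset.mem_insert_self a s')
    rw [Finset.prod_insert hnot, Finset.prod_insert hnot, Finset.card_insert_of_notMem hnot]
    have key := coeff_mul_bound (p a) (∏ i ∈ s', p i) 1 (s'.card : ℤ) ha ih'.1
    constructor
    · intro d hd
      apply key.1
      push_cast at hd
      omega
    · have : ((s'.card + 1 : ℕ) : ℤ) = 1 + (s'.card : ℤ) := by push_cast; ring
      rw [this, key.2, ih'.2]

lemma entry_coeff {n : ℕ} (A : Matrix (Fin n) (Fin n) ℤ)
    (M : Matrix (Fin n) (Fin n) (LaurentPolynomial ℤ))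
    (hM : ∀ i j, M i j = T (-1) * ((A i j : ℤ) : LaurentPolynomial ℤ)
        - T 1 * ((A j i : ℤ) : LaurentPolynomial ℤ)) (i j : Fin n) (d : ℤ) :
    (M i j).coeff d = (if d = -1 then A i j else 0) - (if d = 1 then A j i else 0) := by
  classical
  have hC : ∀ z : ℤ, ((z : ℤ) : LaurentPolynomial ℤ) = LaurentPolynomial.C z := by
    intro z
    exact (map_intCast (LaurentPolynomial.C : ℤ →+* LaurentPolynomial ℤ) z).symm
  have hT : ∀ (k : ℤ) (z : ℤ), (T k : LaurentPolynomial ℤ) * LaurentPolynomial.C z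
      = AddMonoidAlgebra.single k z := by
    intro k z
    rw [mul_comm]
    exact (LaurentPolynomial.single_eq_C_mul_T z k).symm
  rw [hM i j, hC, hC, hT, hT]
  rw [AddMonoidAlgebra.coeff_sub, Finsupp.sub_apply, AddMonoidAlgebra.coeff_single,
    AddMonoidAlgebra.coeff_single, Finsupp.single_apply, Finsupp.single_apply]
  congr 1 <;> simp [eq_comm]

theorem leading_coeff_kauffman_det {n : ℕ} (A : Matrix (Fin n) (Fin n) ℤ)
    (M : Matrix (Fin n) (Fin n) (LaurentPolynomial ℤ))
    (hM : ∀ i j, M i j = T (-1) * ((A i j : ℤ) : LaurentPolynomial ℤ)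
        - T 1 * ((A j i : ℤ) : LaurentPolynomial ℤ)) :
    M.det.coeff (n : ℤ) = (-1 : ℤ) ^ n * A.det ∧ ∀ d : ℤ, (n : ℤ) < d → M.det.coeff d = 0 := by
  classical
  have hbound : ∀ i j : Fin n, ∀ d : ℤ, 1 < d → (M i j).coeff d = 0 := by
    intro i j d hd
    rw [entry_coeff A M hM]
    rw [if_neg (by omega), if_neg (by omega)]
    ring
  have hone : ∀ i j : Fin n, (M i j).coeff 1 = -(A j i) := by
    intro i j
    rw [entry_coeff A M hM]
    rw [if_neg (by omega), if_pos rfl]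
    ring
  have hdet : ∀ d : ℤ, M.det.coeff d =
      ∑ σ : Equiv.Perm (Fin n),
        ((Equiv.Perm.sign σ : ℤ)) * (∏ i, M (σ i) i).coeff d := by
    intro d
    rw [Matrix.det_apply']
    rw [AddMonoidAlgebra.coeff_sum, Finsupp.finset_sum_apply]
    refine Finset.sum_congr rfl fun σ _ => ?_
    have : ((Equiv.Perm.sign σ : ℤ) : LaurentPolynomial ℤ)
        = LaurentPolynomial.C (Equiv.Perm.sign σ : ℤ) :=
      (map_intCast (LaurentPolynomial.C : ℤ →+* LaurentPolynomial ℤ) _).symm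
    rw [this]
    exact AddMonoidAlgebra.coeff_single_zero_mul _ _ _
  have hcard : (Finset.univ : Finset (Fin n)).card = n := Finset.card_univ.trans (Fintype.card_fin n)
  constructor
  · rw [hdet]
    have : ∀ σ : Equiv.Perm (Fin n), (∏ i, M (σ i) i).coeff (n : ℤ)
        = (-1 : ℤ) ^ n * ∏ i, A i (σ i) := by
      intro σ
      have key := (coeff_prod_bound Finset.univ (fun i => M (σ i) i)
        (fun i _ d hd => hbound (σ i) i d hd)).2
      rw [hcard] at key
      rw [key]
      rw [show (∏ i, (M (σ i) i).coeff 1) = ∏ i, (-(A i (σ i))) from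
        Finset.prod_congr rfl fun i _ => hone (σ i) i]
      have : ∀ i : Fin n, -(A i (σ i)) = (-1 : ℤ) * A i (σ i) := fun i => by ring
      rw [Finset.prod_congr rfl fun i _ => this i, Finset.prod_mul_distrib,
        Finset.prod_const, hcard]
    rw [Finset.sum_congr rfl fun σ _ => by rw [this σ]]
    rw [← Matrix.det_transpose A, Matrix.det_apply']
    rw [Finset.mul_sum]
    refine Finset.sum_congr rfl fun σ _ => ?_
    simp only [Matrix.transpose_apply]
    push_cast
    ring
  · intro d hd
    rw [hdet]
    apply Finset.sum_eq_zero
    intro σ _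
    have key := (coeff_prod_bound Finset.univ (fun i => M (σ i) i)
      (fun i _ d hd => hbound (σ i) i d hd)).1
    rw [hcard] at key
    rw [key d hd, mul_zero]
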